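/- Let n ≥ 1 (an integer), κ₁ > 0, R̄ ∈ ℝ, λ > 0 and j ∈ (0,1). Define f_n(ϖ) = −ϖR̄ + ϖ²κ₁/n − λ log(1 − ϖj) for ϖ < 1/j, and define ϖ_n* = (2κ₁/j + nR̄ − √((2κ₁/j − nR̄)² + 8nκ₁λ))/(4κ₁). Then ϖ_n* < 1/j and ϖ_n* is the unique minimizer of f_n on (−∞, 1/j): f_n(ϖ) > f_n(ϖ_n*) for all ϖ < 1/j with ϖ ≠ ϖ_n*. -/

import Mathlib

theorem stmt_8 (n : ℕ) (hn : 1 ≤ n) (κ₁ Rbar lam j : ℝ)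
    (hκ₁ : 0 < κ₁) (hlam : 0 < lam) (hj₀ : 0 < j) (hj₁ : j < 1)
    (f : ℝ → ℝ)
    (hf : f = fun ϖ => -ϖ * Rbar + ϖ ^ 2 * κ₁ / n - lam * Real.log (1 - ϖ * j))
    (ϖstar : ℝ)
    (hϖ : ϖstar = (2 * κ₁ / j + n * Rbar
      - Real.sqrt ((2 * κ₁ / j - n * Rbar) ^ 2 + 8 * n * κ₁ * lam)) / (4 * κ₁)) :
    ϖstar < 1 / j ∧ ∀ ϖ : ℝ, ϖ < 1 / j → ϖ ≠ ϖstar → f ϖstar < f ϖ := by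
  have hn0 : (0:ℝ) < n := by exact_mod_cast hn
  have hj : j ≠ 0 := ne_of_gt hj₀
  have hk : κ₁ ≠ 0 := ne_of_gt hκ₁
  set s := Real.sqrt ((2 * κ₁ / j - n * Rbar) ^ 2 + 8 * n * κ₁ * lam) with hs
  have hD : (0:ℝ) ≤ (2 * κ₁ / j - n * Rbar) ^ 2 + 8 * n * κ₁ * lam := by positivity
  have hs2 : s ^ 2 = (2 * κ₁ / j - n * Rbar) ^ 2 + 8 * n * κ₁ * lam := Real.sq_sqrt hD
  have hA : |2 * κ₁ / j - n * Rbar| < s := by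
    rw [hs, ← Real.sqrt_sq (abs_nonneg _)]
    apply Real.sqrt_lt_sqrt (by positivity)
    have : (0:ℝ) < 8 * n * κ₁ * lam := by positivity
    nlinarith [sq_abs (2 * κ₁ / j - n * Rbar)]
  have hA1 : 2 * κ₁ / j - n * Rbar < s := lt_of_le_of_lt (le_abs_self _) hA
  have hA2 : -(2 * κ₁ / j - n * Rbar) < s := lt_of_le_of_lt (neg_le_abs _) hA
  -- ϖstar < 1/j
  have h1 : ϖstar < 1 / j := by
    rw [hϖ, div_lt_iff₀ (by positivity : (0:ℝ) < 4 * κ₁)]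
    have h4 : 1 / j * (4 * κ₁) = 2 * (2 * κ₁ / j) := by ring
    linarith
  have hden : ∀ ϖ : ℝ, ϖ < 1 / j → 0 < 1 - ϖ * j := by
    intro ϖ h
    have h2 : ϖ * j < 1 := by
      calc ϖ * j < 1 / j * j := by nlinarith
        _ = 1 := by field_simp
    linarith
  set g : ℝ → ℝ := fun ϖ => -Rbar + 2 * ϖ * κ₁ / n + lam * j / (1 - ϖ * j) with hg
  have hderiv : ∀ ϖ : ℝ, ϖ < 1 / j → HasDerivAt f (g ϖ) ϖ := by
    intro ϖ h
    have hd := hden ϖ h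
    have hinner : HasDerivAt (fun x : ℝ => 1 - x * j) (-j) ϖ := by
      simpa using ((hasDerivAt_id ϖ).mul_const j).const_sub 1
    have hlog : HasDerivAt (fun x : ℝ => Real.log (1 - x * j)) ((1 - ϖ * j)⁻¹ * (-j)) ϖ :=
      by have := (Real.hasDerivAt_log (ne_of_gt hd)).comp ϖ hinner; exact this
    have h1' : HasDerivAt (fun x : ℝ => -x * Rbar) (-Rbar) ϖ := by
      simpa using ((hasDerivAt_id ϖ).neg.mul_const Rbar)
    have h2' : HasDerivAt (fun x : ℝ => x ^ 2 * κ₁ / n) (2 * ϖ * κ₁ / n) ϖ := by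
      have := ((hasDerivAt_pow 2 ϖ).mul_const κ₁).div_const (n : ℝ)
      simpa [mul_comm, mul_assoc, mul_left_comm] using this
    have := (h1'.add h2').sub (hlog.const_mul lam)
    rw [hf]
    convert this using 1
    · rfl
    · rfl
    · rfl
    rw [hg]
    field_simp
    ring
  have hg_mono : ∀ x y : ℝ, x < y → y < 1 / j → g x < g y := by
    intro x y hxy hy
    have hdx := hden x (hxy.trans hy)
    have hdy := hden y hy
    have e1 : 2 * x * κ₁ / n < 2 * y * κ₁ / n := by
      apply div_lt_div_of_pos_right _ hn0
      nlinarith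
    have e2 : lam * j / (1 - x * j) < lam * j / (1 - y * j) := by
      apply div_lt_div_of_pos_left (by positivity) hdy
      nlinarith
    simp only [hg]
    linarith
  have hdstar := hden ϖstar h1
  have hcrit : g ϖstar = 0 := by
    have hs2' : (j * s) ^ 2 = (2 * κ₁ - n * Rbar * j) ^ 2 + 8 * n * κ₁ * lam * j ^ 2 := by
      rw [mul_pow, hs2]; field_simp
    have hP1 : 2 * κ₁ + (n:ℝ) * Rbar * j - 4 * κ₁ * j * ϖstar - j * s = 0 := by
      rw [hϖ]; field_simp; ring
    have h8 : 8 * κ₁ * j * (-(n:ℝ) * Rbar * (1 - ϖstar * j)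
        + 2 * ϖstar * κ₁ * (1 - ϖstar * j) + n * lam * j) = 0 := by
      linear_combination (-(2 * κ₁ + (n:ℝ) * Rbar * j - 4 * κ₁ * j * ϖstar + j * s)) * hP1 - hs2'
    have hkey : -(n:ℝ) * Rbar * (1 - ϖstar * j) + 2 * ϖstar * κ₁ * (1 - ϖstar * j)
        + n * lam * j = 0 :=
      (mul_eq_zero.mp h8).resolve_left (by positivity)
    rw [hg]
    have hne : (1 - ϖstar * j) ≠ 0 := ne_of_gt hdstar
    have hnn : (n:ℝ) ≠ 0 := ne_of_gt hn0
    field_simp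
    linear_combination hkey
  -- strict decrease on Iic ϖstar, strict increase on Ico ϖstar (1/j)
  have hanti : StrictAntiOn f (Set.Iic ϖstar) := by
    apply strictAntiOn_of_deriv_neg (convex_Iic ϖstar)
    · intro x hx
      exact (hderiv x (lt_of_le_of_lt hx h1)).continuousAt.continuousWithinAt
    · intro x hx
      rw [interior_Iic] at hx
      rw [(hderiv x (hx.trans h1)).deriv]
      have := hg_mono x ϖstar hx h1
      linarith [hcrit ▸ this]
  have hmono : StrictMonoOn f (Set.Ico ϖstar (1 / j)) := by
    apply strictMonoOn_of_deriv_pos (convex_Ico ϖstar (1 / j))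
    · intro x hx
      exact (hderiv x hx.2).continuousAt.continuousWithinAt
    · intro x hx
      rw [interior_Ico] at hx
      rw [(hderiv x hx.2).deriv]
      have := hg_mono ϖstar x hx.1 hx.2
      linarith [hcrit ▸ this]
  refine ⟨h1, ?_⟩
  intro ϖ hlt hne
  rcases lt_or_gt_of_ne hne with h | h
  · exact hanti h.le (le_refl ϖstar) h
  · exact hmono ⟨le_refl ϖstar, h1⟩ ⟨h.le, hlt⟩ h
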